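/- arXiv:1710.06478 — 2 statements merged into one kernel-verified Lean document; each statement's English description precedes it below -/
import Mathlib

section
/- Let (G,w) be a Hausdorff totally bounded abelian topological group which is the topological direct product (G,w) = (A,w) × (B,w) of two of its subgroups. Then (G,w) ∈ 𝓑 if and only if both (A,w) ∈ 𝓑 and (B,w) ∈ 𝓑. -/
open Filter Topology Pointwise

noncomputable section

/-- The circle group `𝕋 = ℝ/ℤ`. -/
abbrev Circle1 : Type := AddCircle (1 : ℝ)

variable {G : Type*}

/-- The Bohr topology associated to a group topology `t`: the initial topology induced by
all `t`-continuous homomorphisms into the circle. -/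
def bohr [AddCommGroup G] (t : TopologicalSpace G) : TopologicalSpace G :=
  ⨅ (χ : G →+ Circle1) (_ : @Continuous G Circle1 t _ ⇑χ),
    TopologicalSpace.induced ⇑χ inferInstance

/-- A group topology is totally bounded if every neighborhood of `0` has finitely many
translates covering the group. -/
def TotallyBoundedGroup [AddCommGroup G] (w : TopologicalSpace G) : Prop :=
  ∀ U ∈ @nhds G w 0, ∃ F : Finset G, ∀ g : G, ∃ f ∈ F, g - f ∈ U

/-- `(G,w)` is a Bohr group (a member of the class `𝓑`) if `w` is the Bohr topology of some
locally compact Hausdorff group topology on `G`. -/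
def IsBohrGroup [AddCommGroup G] (w : TopologicalSpace G) : Prop :=
  ∃ τ : TopologicalSpace G, @IsTopologicalAddGroup G τ _ ∧ @LocallyCompactSpace G τ ∧
    @T2Space G τ ∧ bohr τ = w

/-- The group of `t`-continuous characters of `G`, as a subgroup of `G →+ 𝕋`. -/
def charSubgroup [AddCommGroup G] (t : TopologicalSpace G) : AddSubgroup (G →+ Circle1) where
  carrier := {χ : G →+ Circle1 | @Continuous G Circle1 t _ ⇑χ}
  zero_mem' := by
    show @Continuous G Circle1 t _ ⇑(0 : G →+ Circle1)
    simp only [AddMonoidHom.zero_apply, show ⇑(0 : G →+ Circle1) = fun _ => (0:Circle1) from rfl]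
    exact @continuous_const G Circle1 t _ 0
  add_mem' := by
    intro χ φ hχ hφ
    show @Continuous G Circle1 t _ ⇑(χ + φ)
    simp only [show ⇑(χ + φ) = fun x => χ x + φ x from rfl]
    exact hχ.add hφ
  neg_mem' := by
    intro χ hχ
    show @Continuous G Circle1 t _ ⇑(-χ)
    simp only [show ⇑(-χ) = fun x => -(χ x) from rfl]
    exact hχ.neg

/-- The compact-open topology on the character group of `(G,t)`. -/
def coTop [AddCommGroup G] (t : TopologicalSpace G) :
    TopologicalSpace (charSubgroup (G := G) t) :=
  TopologicalSpace.generateFrom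
    {S | ∃ (K : Set G) (U : Set Circle1), @IsCompact G t K ∧ IsOpen U ∧
      S = {χ : charSubgroup (G := G) t | ∀ x ∈ K, (χ : G →+ Circle1) x ∈ U}}

/-- The topology of pointwise convergence on the character group of `(G,t)`. -/
def ptTop [AddCommGroup G] (t : TopologicalSpace G) :
    TopologicalSpace (charSubgroup (G := G) t) :=
  TopologicalSpace.induced (fun (χ : charSubgroup (G := G) t) (g : G) => (χ : G →+ Circle1) g)
    Pi.topologicalSpace

/-- Topological isomorphism between two groups carrying explicitly given topologies. -/
def IsTopAddIso {A B : Type*} [AddCommGroup A] [AddCommGroup B]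
    (tA : TopologicalSpace A) (tB : TopologicalSpace B) : Prop :=
  ∃ e : A ≃+ B, @Continuous A B tA tB ⇑e ∧ @Continuous B A tB tA ⇑e.symm

/-- `(G,w)` is the topological direct product of its subgroups `A` and `B`: the natural
addition map `A × B → G` is a group isomorphism and a homeomorphism (bijective, continuous
and open) for the product of the subspace topologies. -/
def IsTopDirectProduct {G : Type*} [AddCommGroup G] (w : TopologicalSpace G)
    (A B : AddSubgroup G) : Prop :=
  Function.Bijective (fun p : A × B => (p.1 : G) + (p.2 : G)) ∧
  @Continuous (A × B) G
    (@instTopologicalSpaceProd A B (TopologicalSpace.induced (Subtype.val : A → G) w)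
      (TopologicalSpace.induced (Subtype.val : B → G) w)) w
    (fun p : A × B => (p.1 : G) + (p.2 : G)) ∧
  @IsOpenMap (A × B) G
    (@instTopologicalSpaceProd A B (TopologicalSpace.induced (Subtype.val : A → G) w)
      (TopologicalSpace.induced (Subtype.val : B → G) w)) w
    (fun p : A × B => (p.1 : G) + (p.2 : G))

section Stmt7Aux

open TopologicalSpace

variable {H K : Type*} [AddCommGroup H] [AddCommGroup K]

lemma cont_comp' {X Y Z : Type*} (tX : TopologicalSpace X) (tY : TopologicalSpace Y)
    (tZ : TopologicalSpace Z) {g : Y → Z} {f : X → Y}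
    (hg : @Continuous Y Z tY tZ g) (hf : @Continuous X Y tX tY f) :
    @Continuous X Z tX tZ (g ∘ f) := by
  letI := tX; letI := tY; letI := tZ
  exact hg.comp hf

lemma bohr_def' (t : TopologicalSpace H) :
    bohr t = ⨅ (χ : H →+ Circle1) (_ : @Continuous H Circle1 t _ ⇑χ),
      TopologicalSpace.induced ⇑χ inferInstance := rfl

lemma bohr_le' (t : TopologicalSpace H) {χ : H →+ Circle1}
    (hχ : @Continuous H Circle1 t _ ⇑χ) :
    bohr t ≤ TopologicalSpace.induced ⇑χ inferInstance :=
  iInf₂_le χ hχ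

lemma le_bohr' {s : TopologicalSpace H} (t : TopologicalSpace H)
    (h : ∀ χ : H →+ Circle1, @Continuous H Circle1 t _ ⇑χ →
      s ≤ TopologicalSpace.induced ⇑χ inferInstance) : s ≤ bohr t :=
  le_iInf₂ h

lemma self_le_bohr' (t : TopologicalSpace H) : t ≤ bohr t :=
  le_bohr' t fun _ hχ => continuous_iff_le_induced.mp hχ

/-- The Bohr topology commutes with transporting the topology along a group isomorphism. -/
lemma bohr_induced' (e : H ≃+ K) (t : TopologicalSpace K) :
    bohr (TopologicalSpace.induced ⇑e t) = TopologicalSpace.induced ⇑e (bohr t) := by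
  have he : @Continuous H K (t.induced ⇑e) t ⇑e := continuous_induced_dom
  have hes : @Continuous K H t (t.induced ⇑e) ⇑e.symm := by
    rw [continuous_iff_le_induced, induced_compose]
    have : (⇑e ∘ ⇑e.symm) = id := funext fun x => e.apply_symm_apply x
    rw [this, induced_id]
  apply le_antisymm
  · rw [bohr_def' t, induced_iInf]
    refine le_iInf fun χ => ?_
    rw [induced_iInf]
    refine le_iInf fun hχ => ?_
    rw [induced_compose]
    exact bohr_le' _ (show @Continuous H Circle1 (t.induced ⇑e) _
      ⇑(χ.comp e.toAddMonoidHom) from cont_comp' (t.induced ⇑e) t _ hχ he)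
  · refine le_bohr' _ fun ψ hψ => ?_
    have hχ : @Continuous K Circle1 t _ ⇑(ψ.comp e.symm.toAddMonoidHom) := cont_comp' t (t.induced ⇑e) _ hψ hes
    calc TopologicalSpace.induced (⇑e) (bohr t)
        ≤ TopologicalSpace.induced ⇑e
            (TopologicalSpace.induced ⇑(ψ.comp e.symm.toAddMonoidHom) inferInstance) :=
          induced_mono (bohr_le' t hχ)
      _ = TopologicalSpace.induced (⇑(ψ.comp e.symm.toAddMonoidHom) ∘ ⇑e) inferInstance :=
          induced_compose
      _ = TopologicalSpace.induced ⇑ψ inferInstance := by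
          congr 1
          funext x
          show ψ (e.symm (e x)) = ψ x
          rw [e.symm_apply_apply]

/-- The Bohr topology of a product topology is the product of the Bohr topologies. -/
lemma bohr_prod' (tH : TopologicalSpace H) (tK : TopologicalSpace K) :
    bohr (@instTopologicalSpaceProd H K tH tK) =
      @instTopologicalSpaceProd H K (bohr tH) (bohr tK) := by
  have hPdef : ∀ (t1 : TopologicalSpace H) (t2 : TopologicalSpace K),
      @instTopologicalSpaceProd H K t1 t2 =
        TopologicalSpace.induced Prod.fst t1 ⊓ TopologicalSpace.induced Prod.snd t2 :=
    fun _ _ => rfl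
  apply le_antisymm
  · rw [hPdef (bohr tH) (bohr tK)]
    refine le_inf ?_ ?_
    · rw [bohr_def' tH, induced_iInf]
      refine le_iInf fun χ => ?_
      rw [induced_iInf]
      refine le_iInf fun hχ => ?_
      rw [induced_compose]
      refine bohr_le' _ (show @Continuous (H × K) Circle1
        (@instTopologicalSpaceProd H K tH tK) _ ⇑(χ.comp (AddMonoidHom.fst H K)) from ?_)
      letI := tH; letI := tK
      exact hχ.comp continuous_fst
    · rw [bohr_def' tK, induced_iInf]
      refine le_iInf fun χ => ?_
      rw [induced_iInf]
      refine le_iInf fun hχ => ?_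
      rw [induced_compose]
      refine bohr_le' _ (show @Continuous (H × K) Circle1
        (@instTopologicalSpaceProd H K tH tK) _ ⇑(χ.comp (AddMonoidHom.snd H K)) from ?_)
      letI := tH; letI := tK
      exact hχ.comp continuous_snd
  · refine le_bohr' _ fun χ hχ => ?_
    have h1 : @Continuous H Circle1 tH _ ⇑(χ.comp (AddMonoidHom.inl H K)) := by
      letI := tH; letI := tK
      exact hχ.comp (continuous_id.prodMk continuous_const)
    have h2 : @Continuous K Circle1 tK _ ⇑(χ.comp (AddMonoidHom.inr H K)) := by
      letI := tH; letI := tK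
      exact hχ.comp (continuous_const.prodMk continuous_id)
    have h1' : @Continuous H Circle1 (bohr tH) _ ⇑(χ.comp (AddMonoidHom.inl H K)) :=
      continuous_iff_le_induced.mpr (bohr_le' tH h1)
    have h2' : @Continuous K Circle1 (bohr tK) _ ⇑(χ.comp (AddMonoidHom.inr H K)) :=
      continuous_iff_le_induced.mpr (bohr_le' tK h2)
    rw [← continuous_iff_le_induced]
    have key : ⇑χ = fun p : H × K =>
        (χ.comp (AddMonoidHom.inl H K)) p.1 + (χ.comp (AddMonoidHom.inr H K)) p.2 := by
      funext p
      show χ p = χ (p.1, 0) + χ (0, p.2)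
      rw [← map_add]
      congr 1
      ext <;> simp
    rw [key]
    letI := bohr tH; letI := bohr tK
    exact (h1'.comp continuous_fst).add (h2'.comp continuous_snd)

/-- Transport of the relevant topological properties along a group isomorphism. -/
lemma transport_props' (e : H ≃+ K) (t : TopologicalSpace H)
    (hg : @IsTopologicalAddGroup H t _) (hlc : @LocallyCompactSpace H t)
    (h2 : @T2Space H t) :
    @IsTopologicalAddGroup K (t.coinduced ⇑e) _ ∧ @LocallyCompactSpace K (t.coinduced ⇑e) ∧
      @T2Space K (t.coinduced ⇑e) := by
  letI := t
  letI tK : TopologicalSpace K := t.coinduced ⇑e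
  haveI := hg; haveI := hlc; haveI := h2
  have hco : (TopologicalSpace.coinduced ⇑e t) = TopologicalSpace.induced ⇑e.symm t :=
    (congrFun (Equiv.induced_symm e.toEquiv) t).symm
  have hec : Continuous ⇑e := continuous_coinduced_rng
  have hesc : Continuous ⇑e.symm :=
    continuous_iff_le_induced.mpr (le_of_eq hco)
  have homeo : H ≃ₜ K := ⟨e.toEquiv, hec, hesc⟩
  refine ⟨?_, ?_, ?_⟩
  · refine { continuous_add := ?_, continuous_neg := ?_ }
    · have hf : (fun p : K × K => p.1 + p.2) =
          fun p : K × K => e (e.symm p.1 + e.symm p.2) := by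
        funext p
        rw [map_add, e.apply_symm_apply, e.apply_symm_apply]
      rw [hf]
      exact hec.comp ((hesc.comp continuous_fst).add (hesc.comp continuous_snd))
    · have hf : (fun x : K => -x) = fun x : K => e (-(e.symm x)) := by
        funext x
        rw [map_neg, e.apply_symm_apply]
      rw [hf]
      exact hec.comp ((hesc.neg))
  · exact homeo.symm.isOpenEmbedding.locallyCompactSpace
  · exact T2Space.of_injective_continuous e.symm.injective hesc

/-- One half of the main theorem: the `π`-quotient construction of a locally compact
witness topology on a direct factor. -/
lemma forward_piece' {G A : Type*} [AddCommGroup G] [AddCommGroup A]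
    (w τ : TopologicalSpace G) (wA : TopologicalSpace A)
    (hτg : @IsTopologicalAddGroup G τ _) (hτlc : @LocallyCompactSpace G τ)
    (hbohr : bohr τ = w) (hA2 : @T2Space A wA)
    (π : G →+ A) (ι : A →+ G) (hπι : ∀ a, π (ι a) = a)
    (hπw : @Continuous G A w wA ⇑π)
    (hwA : wA = TopologicalSpace.induced ⇑ι w) :
    IsBohrGroup wA := by
  letI := τ
  letI tA : TopologicalSpace A := τ.coinduced ⇑π
  haveI := hτg; haveI := hτlc
  have hπsurj : Function.Surjective ⇑π := fun a => ⟨ι a, hπι a⟩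
  have hπc : Continuous ⇑π := continuous_coinduced_rng
  have hτw : τ ≤ w := hbohr ▸ self_le_bohr' τ
  have hcharw : ∀ χ : G →+ Circle1, Continuous ⇑χ → @Continuous G Circle1 w _ ⇑χ :=
    fun χ hχ => continuous_iff_le_induced.mpr (hbohr ▸ bohr_le' τ hχ)
  have hιw : @Continuous A G wA w ⇑ι := by
    rw [continuous_iff_le_induced, hwA]
  -- the projection is an open map onto `(A, tA)`
  have hπopen : IsOpenMap ⇑π := by
    intro U hU
    have hiff : @IsOpen A (τ.coinduced ⇑π) (⇑π '' U) ↔ IsOpen (⇑π ⁻¹' (⇑π '' U)) :=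
      isOpen_coinduced
    refine hiff.mpr ?_
    have hset : ⇑π ⁻¹' (⇑π '' U) = U + ((π.ker : AddSubgroup G) : Set G) := by
      ext g
      constructor
      · rintro ⟨u, hu, hgu⟩
        refine Set.mem_add.mpr ⟨u, hu, g - u, ?_, by abel⟩
        show g - u ∈ π.ker
        rw [AddMonoidHom.mem_ker, map_sub, hgu, sub_self]
      · intro hg
        obtain ⟨u, hu, k, hk, rfl⟩ := Set.mem_add.mp hg
        refine ⟨u, hu, ?_⟩
        have hk0 : π k = 0 := AddMonoidHom.mem_ker.mp hk
        rw [map_add, hk0, add_zero]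
    rw [hset]
    exact hU.add_right
  -- `(A, tA)` is a topological group
  have hqm2 : Topology.IsQuotientMap (Prod.map ⇑π ⇑π) :=
    (hπopen.prodMap hπopen).isQuotientMap (hπc.prodMap hπc) (hπsurj.prodMap hπsurj)
  have hgA : @IsTopologicalAddGroup A tA _ := by
    refine { continuous_add := ?_, continuous_neg := ?_ }
    · refine hqm2.continuous_iff.mpr ?_
      have hf : ((fun p : A × A => p.1 + p.2) ∘ Prod.map ⇑π ⇑π) =
          ⇑π ∘ (fun p : G × G => p.1 + p.2) := by
        funext p
        exact (map_add π p.1 p.2).symm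
      rw [hf]
      exact hπc.comp continuous_add
    · refine continuous_coinduced_dom.mpr ?_
      have hf : ((fun a : A => -a) ∘ ⇑π) = ⇑π ∘ (fun g : G => -g) := by
        funext g
        exact (map_neg π g).symm
      rw [hf]
      exact hπc.comp continuous_neg
  -- `(A, tA)` is locally compact
  have hlcA : @LocallyCompactSpace A tA := by
    constructor
    intro a N hN
    have hN' : N ∈ nhds (π (ι a)) := by rw [hπι a]; exact hN
    have h1 : ⇑π ⁻¹' N ∈ nhds (ι a) := hπc.continuousAt.preimage_mem_nhds hN'
    obtain ⟨Kc, hKn, hKN, hKc⟩ := hτlc.local_compact_nhds (ι a) _ h1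
    refine ⟨⇑π '' Kc, ?_, ?_, hKc.image hπc⟩
    · obtain ⟨U, hUK, hUo, hUm⟩ := mem_nhds_iff.mp hKn
      refine Filter.mem_of_superset ((hπopen U hUo).mem_nhds ⟨ι a, hUm, hπι a⟩)
        (Set.image_mono hUK)
    · rintro x ⟨g, hg, rfl⟩
      exact hKN hg
  -- the Bohr topology of `tA` is `wA`
  have hbA : bohr tA = wA := by
    apply le_antisymm
    · rw [hwA, ← hbohr, bohr_def' τ, induced_iInf]
      refine le_iInf fun χ => ?_
      rw [induced_iInf]
      refine le_iInf fun hχ => ?_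
      rw [induced_compose]
      have hφ : @Continuous A Circle1 tA _ ⇑(χ.comp ι) := by
        refine continuous_coinduced_dom.mpr ?_
        show Continuous (⇑(χ.comp ι) ∘ ⇑π)
        have hstep : @Continuous G Circle1 w _ (⇑χ ∘ (⇑ι ∘ ⇑π)) :=
          cont_comp' w w _ (hcharw χ hχ) (cont_comp' w wA w hιw hπw)
        exact cont_comp' τ w _ (g := ⇑χ ∘ (⇑ι ∘ ⇑π)) (f := id) hstep (continuous_id_of_le hτw)
      exact bohr_le' tA hφ
    · refine le_bohr' tA fun ψ hψ => ?_
      rw [← continuous_iff_le_induced]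
      have h1 : @Continuous G Circle1 τ _ ⇑(ψ.comp π) := hψ.comp hπc
      have h2 : @Continuous G Circle1 w _ ⇑(ψ.comp π) := hcharw _ h1
      have h3 : @Continuous A Circle1 wA _ (⇑(ψ.comp π) ∘ ⇑ι) := cont_comp' wA w _ h2 hιw
      have hfun : (⇑(ψ.comp π) ∘ ⇑ι) = ⇑ψ := funext fun a => congrArg ψ (hπι a)
      rw [← hfun]
      exact h3
  -- `(A, tA)` is Hausdorff
  have h2A : @T2Space A tA := by
    have hle : tA ≤ wA := hbA ▸ self_le_bohr' tA
    exact @T2Space.of_injective_continuous A A tA wA hA2 id Function.injective_id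
      (continuous_id_of_le hle)
  exact ⟨tA, hgA, hlcA, h2A, hbA⟩

end Stmt7Aux

/-- if `(G,w)` is the topological direct product of its subgroups `A` and `B`,
then `(G,w) ∈ 𝓑` iff `(A,w) ∈ 𝓑` and `(B,w) ∈ 𝓑`. -/
theorem stmt7 {G : Type*} [AddCommGroup G] (w : TopologicalSpace G)
    (hgrp : @IsTopologicalAddGroup G w _) (hT2 : @T2Space G w) (htb : TotallyBoundedGroup w)
    (A B : AddSubgroup G) (hprod : IsTopDirectProduct w A B) :
    IsBohrGroup w ↔
      (IsBohrGroup (TopologicalSpace.induced (Subtype.val : A → G) w) ∧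
       IsBohrGroup (TopologicalSpace.induced (Subtype.val : B → G) w)) := by
  obtain ⟨hbij, hcont, hopen⟩ := hprod
  -- the canonical group isomorphism `A × B ≃+ G`
  let addm : A × B →+ G := (A.subtype).coprod (B.subtype)
  have hbij' : Function.Bijective ⇑addm := hbij
  let e : A × B ≃+ G := AddEquiv.ofBijective addm hbij'
  have hecoe : ⇑e = fun p : A × B => (p.1 : G) + (p.2 : G) := rfl
  have hec : @Continuous (A × B) G
      (@instTopologicalSpaceProd A B (TopologicalSpace.induced (Subtype.val : A → G) w)
        (TopologicalSpace.induced (Subtype.val : B → G) w)) w ⇑e := hcont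
  have heo : @IsOpenMap (A × B) G
      (@instTopologicalSpaceProd A B (TopologicalSpace.induced (Subtype.val : A → G) w)
        (TopologicalSpace.induced (Subtype.val : B → G) w)) w ⇑e := hopen
  have hes : @Continuous G (A × B) w
      (@instTopologicalSpaceProd A B (TopologicalSpace.induced (Subtype.val : A → G) w)
        (TopologicalSpace.induced (Subtype.val : B → G) w)) ⇑e.symm := by
    letI := @instTopologicalSpaceProd A B (TopologicalSpace.induced (Subtype.val : A → G) w)
      (TopologicalSpace.induced (Subtype.val : B → G) w)
    letI := w
    refine continuous_def.mpr fun V hV => ?_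
    have himg : ⇑e '' V = ⇑e.symm ⁻¹' V := e.toEquiv.image_eq_preimage_symm V
    rw [← himg]
    exact heo V hV
  -- the algebraic projections
  let πA : G →+ A := (AddMonoidHom.fst A B).comp e.symm.toAddMonoidHom
  let πB : G →+ B := (AddMonoidHom.snd A B).comp e.symm.toAddMonoidHom
  have hsymm : ∀ p : A × B, e.symm ((p.1 : G) + (p.2 : G)) = p :=
    fun p => e.symm_apply_apply p
  have hπιA : ∀ a : A, πA (A.subtype a) = a := by
    intro a
    show (e.symm ((a : G))).1 = a
    have h0 : ((a : G)) = ((a, (0 : B)).1 : G) + ((a, (0 : B)).2 : G) := by simp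
    rw [h0, hsymm (a, 0)]
  have hπιB : ∀ b : B, πB (B.subtype b) = b := by
    intro b
    show (e.symm ((b : G))).2 = b
    have h0 : ((b : G)) = (((0 : A), b).1 : G) + (((0 : A), b).2 : G) := by simp
    rw [h0, hsymm (0, b)]
  have hπAw : @Continuous G A w (TopologicalSpace.induced (Subtype.val : A → G) w) ⇑πA := by
    have h1 : @Continuous (A × B) A
        (@instTopologicalSpaceProd A B (TopologicalSpace.induced (Subtype.val : A → G) w)
          (TopologicalSpace.induced (Subtype.val : B → G) w))
        (TopologicalSpace.induced (Subtype.val : A → G) w) Prod.fst := by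
      letI := TopologicalSpace.induced (Subtype.val : A → G) w
      letI := TopologicalSpace.induced (Subtype.val : B → G) w
      exact continuous_fst
    exact h1.comp hes
  have hπBw : @Continuous G B w (TopologicalSpace.induced (Subtype.val : B → G) w) ⇑πB := by
    have h1 : @Continuous (A × B) B
        (@instTopologicalSpaceProd A B (TopologicalSpace.induced (Subtype.val : A → G) w)
          (TopologicalSpace.induced (Subtype.val : B → G) w))
        (TopologicalSpace.induced (Subtype.val : B → G) w) Prod.snd := by
      letI := TopologicalSpace.induced (Subtype.val : A → G) w
      letI := TopologicalSpace.induced (Subtype.val : B → G) w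
      exact continuous_snd
    exact h1.comp hes
  have hT2A : @T2Space A (TopologicalSpace.induced (Subtype.val : A → G) w) := by
    letI := w; haveI := hT2
    exact T2Space.of_injective_continuous Subtype.val_injective continuous_induced_dom
  have hT2B : @T2Space B (TopologicalSpace.induced (Subtype.val : B → G) w) := by
    letI := w; haveI := hT2
    exact T2Space.of_injective_continuous Subtype.val_injective continuous_induced_dom
  constructor
  · rintro ⟨τ, hτg, hτlc, hτ2, hbohr⟩
    exact ⟨forward_piece' w τ _ hτg hτlc hbohr hT2A πA A.subtype hπιA hπAw rfl,
           forward_piece' w τ _ hτg hτlc hbohr hT2B πB B.subtype hπιB hπBw rfl⟩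
  · rintro ⟨⟨τA, hgA, hlcA, h2A, hbA⟩, ⟨τB, hgB, hlcB, h2B, hbB⟩⟩
    have hgP : @IsTopologicalAddGroup (A × B) (@instTopologicalSpaceProd A B τA τB) _ := by
      letI := τA; letI := τB; haveI := hgA; haveI := hgB; exact inferInstance
    have hlcP : @LocallyCompactSpace (A × B) (@instTopologicalSpaceProd A B τA τB) := by
      letI := τA; letI := τB; haveI := hlcA; haveI := hlcB; exact inferInstance
    have h2P : @T2Space (A × B) (@instTopologicalSpaceProd A B τA τB) := by
      letI := τA; letI := τB; haveI := h2A; haveI := h2B; exact inferInstance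
    obtain ⟨hgG, hlcG, h2G⟩ :=
      transport_props' e (@instTopologicalSpaceProd A B τA τB) hgP hlcP h2P
    refine ⟨TopologicalSpace.coinduced ⇑e (@instTopologicalSpaceProd A B τA τB),
      hgG, hlcG, h2G, ?_⟩
    have h1 : TopologicalSpace.coinduced ⇑e (@instTopologicalSpaceProd A B τA τB) =
        TopologicalSpace.induced ⇑e.symm (@instTopologicalSpaceProd A B τA τB) :=
      (congrFun (Equiv.induced_symm e.toEquiv) _).symm
    rw [h1, bohr_induced' e.symm (@instTopologicalSpaceProd A B τA τB), bohr_prod' τA τB,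
      hbA, hbB]
    have h2 : TopologicalSpace.induced ⇑e.symm
        (@instTopologicalSpaceProd A B (TopologicalSpace.induced (Subtype.val : A → G) w)
          (TopologicalSpace.induced (Subtype.val : B → G) w)) =
        TopologicalSpace.coinduced ⇑e
        (@instTopologicalSpaceProd A B (TopologicalSpace.induced (Subtype.val : A → G) w)
          (TopologicalSpace.induced (Subtype.val : B → G) w)) :=
      congrFun (Equiv.induced_symm e.toEquiv) _
    rw [h2]
    apply le_antisymm
    · exact coinduced_le_iff_le_induced.mpr (continuous_iff_le_induced.mp hec)
    · refine TopologicalSpace.le_def.mpr fun U hU => ?_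
      have hpre : @IsOpen (A × B)
          (@instTopologicalSpaceProd A B (TopologicalSpace.induced (Subtype.val : A → G) w)
            (TopologicalSpace.induced (Subtype.val : B → G) w)) (⇑e ⁻¹' U) :=
        isOpen_coinduced.mp hU
      have himg := heo _ hpre
      rwa [Set.image_preimage_eq U e.surjective] at himg

end
end

section
/- Let (G,t) be a topological abelian group with character group G' = (G,t)^. The following are equivalent: (1) every sequentially continuous group homomorphism from (G,t) to 𝕋 is continuous; (2) the group of continuous characters of (G, s_g[t]) equals G'; (3) the Bohr topology of (G, s_g[t]) equals the Bohr topology of (G,t), i.e. s_g[t]⁺ = t⁺; (4) there exists a g-sequential group topology τ on G with t ⊆ τ and τ⁺ = t⁺. -/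
open Filter Topology Pointwise

noncomputable section

variable {G : Type*}

/-- `U` is sequentially open for the topology `t`. -/
def SeqOpenIn (t : TopologicalSpace G) (U : Set G) : Prop :=
  ∀ (u : ℕ → G) (a : G), Filter.Tendsto u Filter.atTop (@nhds G t a) → a ∈ U →
    ∀ᶠ n in Filter.atTop, u n ∈ U

/-- The sequential modification of `t`: the finest topology with the same convergent
sequences as `t`; its open sets are the `t`-sequentially open sets. -/
def seqMod (t : TopologicalSpace G) : TopologicalSpace G where
  IsOpen U := SeqOpenIn t U
  isOpen_univ := fun _u _a _hu _ha => Filter.Eventually.of_forall fun _ => trivial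
  isOpen_inter := fun _U _V hU hV u a hu ha => (hU u a hu ha.1).and (hV u a hu ha.2)
  isOpen_sUnion := fun S hS u a hu ha => by
    obtain ⟨s, hsS, has⟩ := ha
    exact (hS s hsS u a hu has).mono fun n hn => ⟨s, hsS, hn⟩

/-- The `g`-sequential modification `s_g[t]`: the finest group topology coarser than the
sequential modification of `t`. -/
def sg [AddCommGroup G] (t : TopologicalSpace G) : TopologicalSpace G :=
  sInf {τ : TopologicalSpace G | @IsTopologicalAddGroup G τ _ ∧ seqMod t ≤ τ}

/-- The `k`-modification of `t`: `U` is open iff `U ∩ K` is relatively open in `K` for every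
`t`-compact `K`. -/
def kMod (t : TopologicalSpace G) : TopologicalSpace G :=
  ⨆ (K : Set G) (_ : @IsCompact G t K),
    TopologicalSpace.coinduced (Subtype.val : K → G) (TopologicalSpace.induced Subtype.val t)

/-- The topology `k_g[t]`: the supremum (finest) of all group topologies lying between `t`
and the `k`-modification of `t`. -/
def kg [AddCommGroup G] (t : TopologicalSpace G) : TopologicalSpace G :=
  sInf {τ : TopologicalSpace G | @IsTopologicalAddGroup G τ _ ∧ kMod t ≤ τ ∧ τ ≤ t}

/-- Two topologies have the same convergent sequences. -/
def SameSequences (t s : TopologicalSpace G) : Prop :=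
  ∀ (u : ℕ → G) (a : G),
    Filter.Tendsto u Filter.atTop (@nhds G t a) ↔ Filter.Tendsto u Filter.atTop (@nhds G s a)

/-- Two topologies have the same compact subsets. -/
def SameCompacts (t s : TopologicalSpace G) : Prop :=
  ∀ K : Set G, @IsCompact G t K ↔ @IsCompact G s K

/-- A character is sequentially continuous for `t`. -/
def SeqContinuousChar [AddCommGroup G] (t : TopologicalSpace G) (f : G →+ Circle1) : Prop :=
  ∀ (u : ℕ → G) (a : G), Filter.Tendsto u Filter.atTop (@nhds G t a) →
    Filter.Tendsto (fun n => f (u n)) Filter.atTop (nhds (f a))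

/-- A character is `k`-continuous for `t`: continuous on every `t`-compact subset. -/
def KContinuousChar [AddCommGroup G] (t : TopologicalSpace G) (f : G →+ Circle1) : Prop :=
  ∀ K : Set G, @IsCompact G t K → @ContinuousOn G Circle1 t _ ⇑f K


section AuxLemmas

lemma seqMod_le_self (t : TopologicalSpace G) : seqMod t ≤ t := by
  intro U hU u a hu ha
  exact hu (@IsOpen.mem_nhds G t a U hU ha)

lemma tendsto_seqMod {t : TopologicalSpace G} {u : ℕ → G} {a : G}
    (h : Filter.Tendsto u Filter.atTop (@nhds G t a)) :
    Filter.Tendsto u Filter.atTop (@nhds G (seqMod t) a) := by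
  rw [@tendsto_nhds _ (seqMod t)]
  intro U hU haU
  exact hU u a h haU

variable [AddCommGroup G]

lemma sg_group (t : TopologicalSpace G) : @IsTopologicalAddGroup G (sg t) _ :=
  topologicalAddGroup_sInf fun _τ hτ => hτ.1

lemma seqMod_le_sg (t : TopologicalSpace G) : seqMod t ≤ sg t :=
  le_sInf fun _τ hτ => hτ.2

lemma sg_le (t : TopologicalSpace G) (hgrp : @IsTopologicalAddGroup G t _) : sg t ≤ t :=
  sInf_le ⟨hgrp, seqMod_le_self t⟩

lemma tendsto_sg_iff {t : TopologicalSpace G} (hgrp : @IsTopologicalAddGroup G t _)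
    {u : ℕ → G} {a : G} :
    Filter.Tendsto u Filter.atTop (@nhds G (sg t) a) ↔
      Filter.Tendsto u Filter.atTop (@nhds G t a) :=
  ⟨fun h => h.mono_right (nhds_mono (sg_le t hgrp)),
   fun h => (tendsto_seqMod h).mono_right (nhds_mono (seqMod_le_sg t))⟩

lemma seqMod_sg (t : TopologicalSpace G) (hgrp : @IsTopologicalAddGroup G t _) :
    seqMod (sg t) = seqMod t := by
  refine TopologicalSpace.ext ?_
  funext U
  exact propext ⟨fun h u a hu ha => h u a ((tendsto_sg_iff hgrp).2 hu) ha,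
    fun h u a hu ha => h u a ((tendsto_sg_iff hgrp).1 hu) ha⟩

lemma sg_idem (t : TopologicalSpace G) (hgrp : @IsTopologicalAddGroup G t _) :
    sg (sg t) = sg t := by
  conv_lhs => rw [sg, seqMod_sg t hgrp]
  rfl

lemma seqCont_cont_sg {t : TopologicalSpace G} {f : G →+ Circle1}
    (h : ∀ (u : ℕ → G) (a : G), Filter.Tendsto u Filter.atTop (@nhds G t a) →
      Filter.Tendsto (fun n => f (u n)) Filter.atTop (nhds (f a))) :
    @Continuous G Circle1 (sg t) _ ⇑f := by
  rw [@continuous_iff_le_induced _ _ _ (sg t)]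
  refine sInf_le ⟨topologicalAddGroup_induced f, ?_⟩
  rw [← @continuous_iff_le_induced _ _ _ (seqMod t)]
  rw [@continuous_def _ _ (seqMod t)]
  intro U hU u a hu ha
  exact (h u a hu) (hU.mem_nhds ha)

lemma le_bohr (t : TopologicalSpace G) : t ≤ bohr t := by
  unfold bohr
  exact le_iInf fun χ => le_iInf fun hχ => (@continuous_iff_le_induced _ _ ⇑χ t _).mp hχ

lemma bohr_le_induced {t : TopologicalSpace G} {f : G →+ Circle1}
    (hf : @Continuous G Circle1 t _ ⇑f) :
    bohr t ≤ TopologicalSpace.induced ⇑f inferInstance := by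
  unfold bohr
  exact iInf₂_le f hf

end AuxLemmas

/-- for a topological abelian group `(G,t)`, TFAE: every sequentially
continuous character is continuous; `(G,s_g[t])` has the same characters as `(G,t)`;
`s_g[t]⁺ = t⁺`; there is a `g`-sequential group topology `τ ⊇ t` with `τ⁺ = t⁺`. -/
theorem stmt14 {G : Type*} [AddCommGroup G] (t : TopologicalSpace G)
    (hgrp : @IsTopologicalAddGroup G t _) :
    [∀ f : G →+ Circle1, SeqContinuousChar t f → @Continuous G Circle1 t _ ⇑f,
     charSubgroup (sg t) = charSubgroup t,
     bohr (sg t) = bohr t,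
     ∃ τ : TopologicalSpace G, @IsTopologicalAddGroup G τ _ ∧ sg τ = τ ∧ τ ≤ t ∧
       bohr τ = bohr t].TFAE := by
  tfae_have 1 → 2
  · intro h1
    ext χ
    show @Continuous G Circle1 (sg t) _ ⇑χ ↔ @Continuous G Circle1 t _ ⇑χ
    constructor
    · intro hχ
      refine h1 χ fun u a hu => ?_
      exact (@Continuous.tendsto _ _ (sg t) _ _ hχ a).comp ((tendsto_sg_iff hgrp).2 hu)
    · intro hχ
      rw [@continuous_iff_le_induced _ _ _ (sg t)]
      exact le_trans (sg_le t hgrp) ((@continuous_iff_le_induced _ _ ⇑χ t _).mp hχ)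
  tfae_have 2 → 3
  · intro h2
    have hiff : ∀ χ : G →+ Circle1,
        @Continuous G Circle1 (sg t) _ ⇑χ ↔ @Continuous G Circle1 t _ ⇑χ :=
      fun χ => SetLike.ext_iff.mp h2 χ
    unfold bohr
    exact iInf_congr fun χ => iInf_congr_Prop (hiff χ) fun _ => rfl
  tfae_have 3 → 4
  · exact fun h3 => ⟨sg t, sg_group t, sg_idem t hgrp, sg_le t hgrp, h3⟩
  tfae_have 4 → 1
  · rintro ⟨τ, hτg, hτsg, hτle, hτbohr⟩ f hf
    have hfτ : ∀ (u : ℕ → G) (a : G), Filter.Tendsto u Filter.atTop (@nhds G τ a) →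
        Filter.Tendsto (fun n => f (u n)) Filter.atTop (nhds (f a)) :=
      fun u a hu => hf u a (hu.mono_right (nhds_mono hτle))
    have hcont : @Continuous G Circle1 τ _ ⇑f := by
      have h := seqCont_cont_sg (t := τ) hfτ
      rwa [hτsg] at h
    have h1 : bohr τ ≤ TopologicalSpace.induced ⇑f inferInstance := bohr_le_induced hcont
    have h2 : t ≤ TopologicalSpace.induced ⇑f inferInstance :=
      le_trans (le_bohr t) (hτbohr ▸ h1)
    exact (@continuous_iff_le_induced _ _ ⇑f t _).mpr h2
  tfae_finish


end
end
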